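/- Duality between the d-plane transform and its dual transform in R^n: Let 1 ≤ d < n, let f ∈ C_c(ℝⁿ), and let Φ be a complex-valued function on the set of affine d-dimensional planes in ℝⁿ such that the map (g,w) ↦ Φ(g·(E_d + ŵ)) on O(n) × ℝ^{n−d} is continuous and bounded. Define the d-plane transform f̂(ξ) = ∫_ξ f (integral with respect to d-dimensional Lebesgue measure on the plane ξ) and the dual transform Φ̌(x) = ∫_{O(n)} Φ(x + g·E_d) dg (Haar probability measure on O(n)). Then ∫_{ℝⁿ} f(x) Φ̌(x) dx = ∫_{O(n)} ∫_{ℝ^{n−d}} f̂(g·(E_d + ŵ)) Φ(g·(E_d + ŵ)) dw dg, both sides being absolutely convergent. -/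

import Mathlib

open MeasureTheory Real Set

noncomputable section

/-- The orthogonal group `O(n)`. -/
abbrev OGn (n : ℕ) := Matrix.orthogonalGroup (Fin n) ℝ

instance (n : ℕ) : MeasurableSpace (OGn n) := borel _

instance (n : ℕ) : BorelSpace (OGn n) := ⟨rfl⟩

/-- The point `g·(ŵ + t₁e₁ + ⋯ + t_d e_d)` of the affine `d`-plane `g·(E_d + ŵ)`, where
`E_d = span(e₁,…,e_d)` and `ŵ = Σ_{i>d} wᵢeᵢ`. -/
def planePt (n d : ℕ) (hdn : d < n) (g : OGn n) (w : Fin (n - d) → ℝ)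
    (t : Fin d → ℝ) : EuclideanSpace ℝ (Fin n) :=
  Matrix.toEuclideanLin (g : Matrix (Fin n) (Fin n) ℝ)
    ((∑ i : Fin (n - d), w i •
        EuclideanSpace.single (⟨d + i.1, by have := i.2; omega⟩ : Fin n) (1:ℝ)) +
      ∑ i : Fin d, t i • EuclideanSpace.single (⟨i.1, lt_trans i.2 hdn⟩ : Fin n) (1:ℝ))

/-- The affine `d`-plane `g·(E_d + ŵ)` in `ℝⁿ`, as a subset of `ℝⁿ`. -/
def planeOf (n d : ℕ) (hdn : d < n) (g : OGn n) (w : Fin (n - d) → ℝ) :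
    Set (EuclideanSpace ℝ (Fin n)) :=
  Set.range (planePt n d hdn g w)

/-- The `d`-plane transform `f̂(g·(E_d + ŵ)) = ∫_{ℝ^d} f(g·(ŵ + Σᵢ tᵢeᵢ)) dt`, the
integral of `f` over the plane `g·(E_d + ŵ)` with respect to `d`-dimensional Lebesgue
measure on it. -/
def dplaneTransform (n d : ℕ) (hdn : d < n) (f : EuclideanSpace ℝ (Fin n) → ℂ)
    (g : OGn n) (w : Fin (n - d) → ℝ) : ℂ :=
  ∫ t : Fin d → ℝ, f (planePt n d hdn g w t)

/-- The dual `d`-plane transform `Φ̌(x) = ∫_{O(n)} Φ(x + g·E_d) dg`, with `ν` the Haar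
probability measure of `O(n)`; `x + g·E_d` is the `d`-plane through `x` with direction
`g·E_d`. -/
def dualDplane (n d : ℕ) (hdn : d < n) (ν : Measure (OGn n))
    (Φ : Set (EuclideanSpace ℝ (Fin n)) → ℂ) (x : EuclideanSpace ℝ (Fin n)) : ℂ :=
  ∫ g : OGn n, Φ (Set.range (fun t : Fin d → ℝ =>
    x + Matrix.toEuclideanLin (g : Matrix (Fin n) (Fin n) ℝ)
      (∑ i : Fin d, t i • EuclideanSpace.single (⟨i.1, lt_trans i.2 hdn⟩ : Fin n) (1:ℝ)))) ∂ν

namespace Aux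

def eqd (n d : ℕ) (hdn : d < n) : Fin d ≃ {j : Fin n // j.1 < d} where
  toFun i := ⟨⟨i.1, lt_trans i.2 hdn⟩, i.2⟩
  invFun j := ⟨j.1.1, j.2⟩
  left_inv _ := rfl
  right_inv _ := rfl

def eqw (n d : ℕ) : Fin (n - d) ≃ {j : Fin n // ¬ j.1 < d} where
  toFun i := ⟨⟨d + i.1, by have := i.2; omega⟩, by simp⟩
  invFun j := ⟨j.1.1 - d, by have := j.1.2; have := j.2; omega⟩
  left_inv i := by ext; simp
  right_inv j := by ext; have := j.2; simp; omega

def arrangeME (n d : ℕ) (hdn : d < n) : ((Fin (n - d) → ℝ) × (Fin d → ℝ)) ≃ᵐ (Fin n → ℝ) :=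
  (MeasurableEquiv.prodComm : _ ≃ᵐ (Fin d → ℝ) × (Fin (n - d) → ℝ)).trans <|
    ((MeasurableEquiv.piCongrLeft (fun _ => ℝ) (eqd n d hdn)).prodCongr
      (MeasurableEquiv.piCongrLeft (fun _ => ℝ) (eqw n d))).trans
      (MeasurableEquiv.piEquivPiSubtypeProd (fun _ : Fin n => ℝ) (fun j => j.1 < d)).symm

lemma arrangeME_mp (n d : ℕ) (hdn : d < n) :
    MeasurePreserving (arrangeME n d hdn) volume volume := by
  have h1 : MeasurePreserving
      (MeasurableEquiv.prodComm : ((Fin (n-d)) → ℝ) × ((Fin d) → ℝ) ≃ᵐ _)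
      volume volume := by
    rw [Measure.volume_eq_prod, Measure.volume_eq_prod]
    exact Measure.measurePreserving_swap
  have h2 := (volume_measurePreserving_piCongrLeft (fun _ : {j : Fin n // j.1 < d} => ℝ)
    (eqd n d hdn)).prod (volume_measurePreserving_piCongrLeft
      (fun _ : {j : Fin n // ¬ j.1 < d} => ℝ) (eqw n d))
  have h3 := (volume_preserving_piEquivPiSubtypeProd (fun _ : Fin n => ℝ)
    (fun j => j.1 < d)).symm
  have h2' : MeasurePreserving
      ((MeasurableEquiv.piCongrLeft (fun _ => ℝ) (eqd n d hdn)).prodCongr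
        (MeasurableEquiv.piCongrLeft (fun _ => ℝ) (eqw n d))) volume volume := by
    rw [Measure.volume_eq_prod, Measure.volume_eq_prod]; exact h2
  exact (h3.comp h2').comp h1

lemma arrangeME_apply (n d : ℕ) (hdn : d < n) (p : (Fin (n - d) → ℝ) × (Fin d → ℝ)) (j : Fin n) :
    arrangeME n d hdn p j =
      if h : j.1 < d then p.2 ⟨j.1, h⟩ else p.1 ⟨j.1 - d, by have := j.2; omega⟩ := by
  rcases p with ⟨w, t⟩
  simp only [arrangeME, MeasurableEquiv.trans_apply]
  by_cases h : j.1 < d <;>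
    simp [h, MeasurableEquiv.piEquivPiSubtypeProd, Equiv.piEquivPiSubtypeProd,
      MeasurableEquiv.coe_piCongrLeft, eqd, eqw, MeasurableEquiv.prodCongr,
      MeasurableEquiv.prodComm, Equiv.piCongrLeft_apply_eq_cast]

lemma arrange_continuous (n d : ℕ) (hdn : d < n) :
    Continuous (fun p : (Fin (n - d) → ℝ) × (Fin d → ℝ) => arrangeME n d hdn p) := by
  apply continuous_pi
  intro j
  simp only [arrangeME_apply n d hdn]
  by_cases h : j.1 < d
  · simp only [dif_pos h]; exact (continuous_apply _).comp continuous_snd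
  · simp only [dif_neg h]; exact (continuous_apply _).comp continuous_fst

lemma mem_unitary (n : ℕ) (g : OGn n) :
    (Matrix.toEuclideanCLM (𝕜 := ℝ) (g : Matrix (Fin n) (Fin n) ℝ)) ∈
      unitary (EuclideanSpace ℝ (Fin n) →L[ℝ] EuclideanSpace ℝ (Fin n)) := by
  have hg : (g : Matrix (Fin n) (Fin n) ℝ) ∈ unitary _ := g.2
  rw [Unitary.mem_iff] at hg ⊢
  constructor
  · rw [← map_star, ← map_mul, hg.1, map_one]
  · rw [← map_star, ← map_mul, hg.2, map_one]

def gLI (n : ℕ) (g : OGn n) : EuclideanSpace ℝ (Fin n) ≃ₗᵢ[ℝ] EuclideanSpace ℝ (Fin n) :=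
  Unitary.linearIsometryEquiv ⟨_, mem_unitary n g⟩

lemma gLI_apply (n : ℕ) (g : OGn n) (v : EuclideanSpace ℝ (Fin n)) :
    gLI n g v = Matrix.toEuclideanLin (g : Matrix (Fin n) (Fin n) ℝ) v := by
  have h := Matrix.coe_toEuclideanCLM_eq_toEuclideanLin (𝕜 := ℝ)
    (A := (g : Matrix (Fin n) (Fin n) ℝ))
  calc gLI n g v = (Matrix.toEuclideanCLM (𝕜 := ℝ) (g : Matrix (Fin n) (Fin n) ℝ)) v := rfl
  _ = _ := by rw [← h]; rfl

lemma sum_apply' {n m : ℕ} (v : Fin m → EuclideanSpace ℝ (Fin n)) (j : Fin n) :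
    (∑ i, v i) j = ∑ i, v i j :=
  by rw [WithLp.ofLp_sum, Finset.sum_apply]

/-- The vector `ŵ + t̂`. -/
def vec (n d : ℕ) (hdn : d < n) (w : Fin (n - d) → ℝ) (t : Fin d → ℝ) :
    EuclideanSpace ℝ (Fin n) :=
  (∑ i : Fin (n - d), w i •
      EuclideanSpace.single (⟨d + i.1, by have := i.2; omega⟩ : Fin n) (1:ℝ)) +
    ∑ i : Fin d, t i • EuclideanSpace.single (⟨i.1, lt_trans i.2 hdn⟩ : Fin n) (1:ℝ)

lemma vec_apply (n d : ℕ) (hdn : d < n) (w : Fin (n - d) → ℝ) (t : Fin d → ℝ) (j : Fin n) :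
    vec n d hdn w t j =
      if h : j.1 < d then t ⟨j.1, h⟩ else w ⟨j.1 - d, by have := j.2; omega⟩ := by
  classical
  simp only [vec, PiLp.add_apply, sum_apply', PiLp.smul_apply, smul_eq_mul,
    EuclideanSpace.single_apply]
  by_cases h : j.1 < d
  · rw [dif_pos h, Finset.sum_eq_zero, Finset.sum_eq_single (⟨j.1, h⟩ : Fin d)]
    · simp
    · intro i _ hi
      rw [if_neg, mul_zero]
      intro hj
      exact hi (by apply Fin.ext; simpa [Fin.ext_iff] using hj.symm)
    · simp
    · intro i _
      rw [if_neg, mul_zero]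
      intro hj
      rw [Fin.ext_iff] at hj
      simp at hj
      omega
  · rw [dif_neg h, Finset.sum_eq_single (⟨j.1 - d, by have := j.2; omega⟩ : Fin (n - d)),
      Finset.sum_eq_zero]
    · rw [if_pos, mul_one, add_zero]
      apply Fin.ext; simp; omega
    · intro i _
      rw [if_neg, mul_zero]
      intro hj
      rw [Fin.ext_iff] at hj
      simp at hj
      omega
    · intro i _ hi
      rw [if_neg, mul_zero]
      intro hj
      refine hi ?_
      apply Fin.ext
      rw [Fin.ext_iff] at hj
      simp at hj ⊢
      omega
    · simp

lemma planePt_def (n d : ℕ) (hdn : d < n) (g : OGn n) (w : Fin (n - d) → ℝ) (t : Fin d → ℝ) :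
    planePt n d hdn g w t =
      Matrix.toEuclideanLin (g : Matrix (Fin n) (Fin n) ℝ) (vec n d hdn w t) := rfl

lemma vec_eq_symm_arrange (n d : ℕ) (hdn : d < n) (w : Fin (n - d) → ℝ) (t : Fin d → ℝ) :
    vec n d hdn w t =
      (MeasurableEquiv.toLp 2 (Fin n → ℝ)) (arrangeME n d hdn (w, t)) := by
  apply PiLp.ext
  intro j
  rw [vec_apply]
  have : (MeasurableEquiv.toLp 2 (Fin n → ℝ)) (arrangeME n d hdn (w, t)) j
      = arrangeME n d hdn (w, t) j := rfl
  rw [this, arrangeME_apply]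

def planeME (n d : ℕ) (hdn : d < n) (g : OGn n) :
    ((Fin (n - d) → ℝ) × (Fin d → ℝ)) ≃ᵐ EuclideanSpace ℝ (Fin n) :=
  (arrangeME n d hdn).trans <|
    (MeasurableEquiv.toLp 2 (Fin n → ℝ)).trans
      (gLI n g).toHomeomorph.toMeasurableEquiv

lemma planeME_apply (n d : ℕ) (hdn : d < n) (g : OGn n)
    (p : (Fin (n - d) → ℝ) × (Fin d → ℝ)) :
    planeME n d hdn g p = planePt n d hdn g p.1 p.2 := by
  show gLI n g ((MeasurableEquiv.toLp 2 (Fin n → ℝ)) (arrangeME n d hdn p)) = _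
  rw [gLI_apply, planePt_def]
  congr 1
  rw [vec_eq_symm_arrange n d hdn]

lemma planeME_mp (n d : ℕ) (hdn : d < n) (g : OGn n) :
    MeasurePreserving (planeME n d hdn g) volume volume := by
  have h := (((gLI n g).measurePreserving).comp
    ((EuclideanSpace.volume_preserving_symm_measurableEquiv_toLp (Fin n)).symm)).comp
    (arrangeME_mp n d hdn)
  exact h

lemma toEuclideanLin_comp (n : ℕ) (A B : Matrix (Fin n) (Fin n) ℝ)
    (v : EuclideanSpace ℝ (Fin n)) :
    Matrix.toEuclideanLin (A * B) v = Matrix.toEuclideanLin A (Matrix.toEuclideanLin B v) := by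
  simp [Matrix.toEuclideanLin_apply, Matrix.mulVec_mulVec]

lemma gLI_symm_apply (n : ℕ) (g : OGn n) (x : EuclideanSpace ℝ (Fin n)) :
    (gLI n g).symm x =
      Matrix.toEuclideanLin (star (g : Matrix (Fin n) (Fin n) ℝ)) x := by
  have hg : (g : Matrix (Fin n) (Fin n) ℝ) * star (g : Matrix (Fin n) (Fin n) ℝ) = 1 :=
    (Unitary.mem_iff.mp g.2).2
  have h : gLI n g (Matrix.toEuclideanLin (star (g : Matrix (Fin n) (Fin n) ℝ)) x) = x := by
    rw [gLI_apply, ← toEuclideanLin_comp, hg]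
    simp [Matrix.toEuclideanLin_apply]
  calc (gLI n g).symm x
      = (gLI n g).symm (gLI n g (Matrix.toEuclideanLin
          (star (g : Matrix (Fin n) (Fin n) ℝ)) x)) := by rw [h]
    _ = _ := (gLI n g).symm_apply_apply _

/-- The `ℝ^{n-d}` part of `g⁻¹ x`. -/
def projW (n d : ℕ) (hdn : d < n) (g : OGn n) (x : EuclideanSpace ℝ (Fin n)) :
    Fin (n - d) → ℝ :=
  fun i => ((gLI n g).symm x) (⟨d + i.1, by have := i.2; omega⟩ : Fin n)

lemma projW_planePt (n d : ℕ) (hdn : d < n) (g : OGn n) (w : Fin (n - d) → ℝ)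
    (t : Fin d → ℝ) : projW n d hdn g (planePt n d hdn g w t) = w := by
  funext i
  unfold projW
  rw [planePt_def, ← gLI_apply, LinearIsometryEquiv.symm_apply_apply, vec_apply]
  rw [dif_neg (by simp)]
  exact congrArg w (Fin.ext (by simp))

lemma planePt_shift (n d : ℕ) (hdn : d < n) (g : OGn n) (w : Fin (n - d) → ℝ)
    (t s : Fin d → ℝ) :
    planePt n d hdn g w (t + s) = planePt n d hdn g w t +
      Matrix.toEuclideanLin (g : Matrix (Fin n) (Fin n) ℝ)
        (∑ i : Fin d, s i • EuclideanSpace.single (⟨i.1, lt_trans i.2 hdn⟩ : Fin n) (1:ℝ)) := by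
  rw [planePt_def, planePt_def, ← map_add]
  congr 1
  unfold vec
  rw [add_assoc]
  congr 1
  rw [← Finset.sum_add_distrib]
  apply Finset.sum_congr rfl
  intro i _
  rw [Pi.add_apply, add_smul]

lemma lineSet_eq (n d : ℕ) (hdn : d < n) (g : OGn n) (x : EuclideanSpace ℝ (Fin n)) :
    Set.range (fun t : Fin d → ℝ =>
      x + Matrix.toEuclideanLin (g : Matrix (Fin n) (Fin n) ℝ)
        (∑ i : Fin d, t i • EuclideanSpace.single (⟨i.1, lt_trans i.2 hdn⟩ : Fin n) (1:ℝ))) =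
    Set.range (planePt n d hdn g (projW n d hdn g x)) := by
  set w0 := projW n d hdn g x
  set t0 : Fin d → ℝ := fun i => ((gLI n g).symm x) (⟨i.1, lt_trans i.2 hdn⟩ : Fin n)
  have hx : x = planePt n d hdn g w0 t0 := by
    rw [planePt_def, ← gLI_apply]
    rw [show vec n d hdn w0 t0 = (gLI n g).symm x by
      ext j
      rw [vec_apply]
      by_cases h : j.1 < d
      · rw [dif_pos h]
      · rw [dif_neg h]
        exact congrArg ((gLI n g).symm x) (Fin.ext (by simp; omega))]
    rw [LinearIsometryEquiv.apply_symm_apply]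
  have hfun : (fun t : Fin d → ℝ =>
      x + Matrix.toEuclideanLin (g : Matrix (Fin n) (Fin n) ℝ)
        (∑ i : Fin d, t i • EuclideanSpace.single (⟨i.1, lt_trans i.2 hdn⟩ : Fin n) (1:ℝ))) =
      fun t => planePt n d hdn g w0 (t0 + t) := by
    funext t
    rw [planePt_shift n d hdn g w0 t0 t, ← hx]
  rw [hfun]
  have hsurj : Function.Surjective (fun t : Fin d → ℝ => t0 + t) :=
    fun y => ⟨y - t0, by simp⟩
  exact Function.Surjective.range_comp hsurj (planePt n d hdn g w0)

lemma planePt_eq_mulVec (n d : ℕ) (hdn : d < n) (g : OGn n)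
    (p : (Fin (n - d) → ℝ) × (Fin d → ℝ)) :
    planePt n d hdn g p.1 p.2 = (WithLp.equiv 2 (Fin n → ℝ)).symm
      ((g : Matrix (Fin n) (Fin n) ℝ).mulVec (arrangeME n d hdn p)) := by
  rw [← planeME_apply]
  show gLI n g ((MeasurableEquiv.toLp 2 (Fin n → ℝ)) (arrangeME n d hdn p)) = _
  rw [gLI_apply, Matrix.toEuclideanLin_apply]
  congr 1

lemma planePt_continuous (n d : ℕ) (hdn : d < n) :
    Continuous (fun q : OGn n × ((Fin (n - d) → ℝ) × (Fin d → ℝ)) =>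
      planePt n d hdn q.1 q.2.1 q.2.2) := by
  have : (fun q : OGn n × ((Fin (n - d) → ℝ) × (Fin d → ℝ)) =>
      planePt n d hdn q.1 q.2.1 q.2.2) = fun q =>
      (WithLp.equiv 2 (Fin n → ℝ)).symm
        ((q.1 : Matrix (Fin n) (Fin n) ℝ).mulVec (arrangeME n d hdn q.2)) := by
    funext q
    exact planePt_eq_mulVec n d hdn q.1 q.2
  rw [this]
  refine (PiLp.continuous_toLp 2 (fun _ : Fin n => ℝ)).comp ?_
  exact Continuous.matrix_mulVec (continuous_subtype_val.comp continuous_fst)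
    ((arrange_continuous n d hdn).comp continuous_snd)

lemma projW_continuous (n d : ℕ) (hdn : d < n) :
    Continuous (fun q : OGn n × EuclideanSpace ℝ (Fin n) => projW n d hdn q.1 q.2) := by
  have : (fun q : OGn n × EuclideanSpace ℝ (Fin n) => projW n d hdn q.1 q.2) =
      fun q => fun i : Fin (n - d) =>
        ((star (q.1 : Matrix (Fin n) (Fin n) ℝ)).mulVec (WithLp.equiv 2 (Fin n → ℝ) q.2))
          (⟨d + i.1, by have := i.2; omega⟩ : Fin n) := by
    funext q i
    unfold projW
    rw [gLI_symm_apply, Matrix.toEuclideanLin_apply]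
    rfl
  rw [this]
  apply continuous_pi
  intro i
  have hm : Continuous (fun q : OGn n × EuclideanSpace ℝ (Fin n) =>
      (star (q.1 : Matrix (Fin n) (Fin n) ℝ)).mulVec (WithLp.equiv 2 (Fin n → ℝ) q.2)) := by
    refine Continuous.matrix_mulVec ?_ ?_
    · exact continuous_star.comp (continuous_subtype_val.comp continuous_fst)
    · exact (PiLp.continuous_ofLp 2 (fun _ : Fin n => ℝ)).comp continuous_snd
  exact (continuous_apply _).comp hm

end Aux

set_option maxHeartbeats 1000000 in
set_option synthInstance.maxHeartbeats 200000 in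
/-- duality between the `d`-plane transform and its dual in `ℝⁿ`:
for `f ∈ C_c(ℝⁿ)` and `Φ` a function on the set of affine `d`-planes such that
`(g,w) ↦ Φ(g·(E_d + ŵ))` is continuous and bounded,
`∫_{ℝⁿ} f(x) Φ̌(x) dx = ∫_{O(n)} ∫_{ℝ^{n−d}} f̂(g·(E_d+ŵ)) Φ(g·(E_d+ŵ)) dw dg`, both sides
being absolutely convergent. -/
theorem stmt_2 (n d : ℕ) (hd : 1 ≤ d) (hdn : d < n) (ν : Measure (OGn n))
    [IsProbabilityMeasure ν] (hinv : ∀ g : OGn n, ν.map (fun h => g * h) = ν)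
    (f : EuclideanSpace ℝ (Fin n) → ℂ) (hf : Continuous f) (hfc : HasCompactSupport f)
    (Φ : Set (EuclideanSpace ℝ (Fin n)) → ℂ)
    (hΦcont : Continuous (fun q : OGn n × (Fin (n - d) → ℝ) => Φ (planeOf n d hdn q.1 q.2)))
    (hΦbdd : ∃ M : ℝ, ∀ (g : OGn n) (w : Fin (n - d) → ℝ), ‖Φ (planeOf n d hdn g w)‖ ≤ M) :
    Integrable (fun x => f x * dualDplane n d hdn ν Φ x) volume ∧
    Integrable (fun q : OGn n × (Fin (n - d) → ℝ) =>
      dplaneTransform n d hdn f q.1 q.2 * Φ (planeOf n d hdn q.1 q.2)) (ν.prod volume) ∧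
    ∫ x, f x * dualDplane n d hdn ν Φ x =
      ∫ q : OGn n × (Fin (n - d) → ℝ),
        dplaneTransform n d hdn f q.1 q.2 * Φ (planeOf n d hdn q.1 q.2) ∂(ν.prod volume) := by
  classical
  obtain ⟨M, hM⟩ := hΦbdd
  set M' : ℝ := max M 0 with hM'def
  set K : OGn n × (Fin (n - d) → ℝ) → ℂ := fun q => Φ (planeOf n d hdn q.1 q.2) with hKdef
  have hM' : ∀ q : OGn n × (Fin (n - d) → ℝ), ‖K q‖ ≤ M' :=
    fun q => le_trans (hM q.1 q.2) (le_max_left _ _)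
  have hKcont : Continuous K := hΦcont
  have hfint : Integrable f volume := hf.integrable_of_hasCompactSupport hfc
  -- the dual transform, rewritten
  have hdual : ∀ x, dualDplane n d hdn ν Φ x = ∫ g, K (g, Aux.projW n d hdn g x) ∂ν := by
    intro x
    unfold dualDplane
    apply integral_congr_ae
    filter_upwards with g
    exact congrArg Φ (Aux.lineSet_eq n d hdn g x)
  -- F is the integrand on O(n) × ℝⁿ
  set F : OGn n × EuclideanSpace ℝ (Fin n) → ℂ :=
    fun z => f z.2 * K (z.1, Aux.projW n d hdn z.1 z.2) with hFdef
  have hFcont : Continuous F :=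
    (hf.comp continuous_snd).mul
      (hKcont.comp (continuous_fst.prodMk (Aux.projW_continuous n d hdn)))
  have hsnd : Integrable (fun z : OGn n × EuclideanSpace ℝ (Fin n) => f z.2) (ν.prod volume) := by
    have hm : AEStronglyMeasurable (fun z : OGn n × EuclideanSpace ℝ (Fin n) => f z.2)
        (ν.prod volume) := (hf.comp continuous_snd).aestronglyMeasurable
    rw [integrable_prod_iff hm]
    refine ⟨Filter.Eventually.of_forall fun g => hfint, ?_⟩
    exact (integrable_const (∫ y, ‖f y‖)).congr (Filter.Eventually.of_forall fun g => rfl)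
  have IntF : Integrable F (ν.prod volume) := by
    refine (hsnd.norm.const_mul M').mono' hFcont.aestronglyMeasurable ?_
    filter_upwards with z
    rw [hFdef]
    calc ‖f z.2 * K (z.1, Aux.projW n d hdn z.1 z.2)‖
        = ‖f z.2‖ * ‖K (z.1, Aux.projW n d hdn z.1 z.2)‖ := norm_mul _ _
      _ ≤ ‖f z.2‖ * M' := by
          exact mul_le_mul_of_nonneg_left (hM' _) (norm_nonneg _)
      _ = M' * ‖f z.2‖ := mul_comm _ _
  have hLHSfun : (fun x => f x * dualDplane n d hdn ν Φ x) =
      fun x => ∫ g, F (g, x) ∂ν := by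
    funext x
    rw [hdual x, ← integral_const_mul]
  -- per-g integrability on the (w,t)-space
  have Ifg : ∀ g : OGn n, Integrable
      (fun p : (Fin (n - d) → ℝ) × (Fin d → ℝ) => f (planePt n d hdn g p.1 p.2))
      (volume.prod volume) := by
    intro g
    have h := ((Aux.planeME_mp n d hdn g).integrable_comp_emb
      (MeasurableEquiv.measurableEmbedding _)).mpr hfint
    have heq : (f ∘ (Aux.planeME n d hdn g)) =
        fun p : (Fin (n - d) → ℝ) × (Fin d → ℝ) => f (planePt n d hdn g p.1 p.2) :=
      funext fun p => by rw [Function.comp_apply, Aux.planeME_apply]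
    rw [← Measure.volume_eq_prod, ← heq]
    exact h
  have Ig : ∀ g : OGn n, Integrable
      (fun p : (Fin (n - d) → ℝ) × (Fin d → ℝ) =>
        f (planePt n d hdn g p.1 p.2) * K (g, p.1)) (volume.prod volume) := by
    intro g
    have hKg : Continuous (fun p : (Fin (n - d) → ℝ) × (Fin d → ℝ) => K (g, p.1)) :=
      hKcont.comp (continuous_const.prodMk continuous_fst)
    have h := (Ifg g).bdd_mul hKg.aestronglyMeasurable (c := M') (Filter.Eventually.of_forall fun p => hM' _)
    exact h.congr (Filter.Eventually.of_forall fun p => mul_comm _ _)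
  -- the triple-product integrand
  set P : (OGn n × (Fin (n - d) → ℝ)) × (Fin d → ℝ) → ℂ :=
    fun r => f (planePt n d hdn r.1.1 r.1.2 r.2) with hPdef
  have IntP' : Integrable
      (fun r : OGn n × ((Fin (n - d) → ℝ) × (Fin d → ℝ)) =>
        f (planePt n d hdn r.1 r.2.1 r.2.2)) (ν.prod (volume.prod volume)) := by
    have hm : AEStronglyMeasurable
        (fun r : OGn n × ((Fin (n - d) → ℝ) × (Fin d → ℝ)) =>
          f (planePt n d hdn r.1 r.2.1 r.2.2)) (ν.prod (volume.prod volume)) :=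
      (hf.comp (Aux.planePt_continuous n d hdn)).aestronglyMeasurable
    rw [integrable_prod_iff hm]
    constructor
    · exact Filter.Eventually.of_forall fun g => Ifg g
    · have hconst : (fun g : OGn n => ∫ p : (Fin (n - d) → ℝ) × (Fin d → ℝ),
          ‖f (planePt n d hdn g p.1 p.2)‖ ∂(volume.prod volume)) =
          fun _ => ∫ x, ‖f x‖ := by
        funext g
        rw [← Measure.volume_eq_prod]
        have heq : (fun p : (Fin (n - d) → ℝ) × (Fin d → ℝ) =>
            ‖f (planePt n d hdn g p.1 p.2)‖) =
            fun p => ‖f (Aux.planeME n d hdn g p)‖ :=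
          funext fun p => by rw [Aux.planeME_apply]
        rw [heq]
        exact (Aux.planeME_mp n d hdn g).integral_comp
          (MeasurableEquiv.measurableEmbedding _) (fun x => ‖f x‖)
      rw [hconst]
      exact integrable_const _
  have IntP : Integrable P ((ν.prod volume).prod volume) :=
    ((measurePreserving_prodAssoc ν volume volume).integrable_comp_emb
      MeasurableEquiv.prodAssoc.measurableEmbedding).mpr IntP'
  have IntH : Integrable (fun r : (OGn n × (Fin (n - d) → ℝ)) × (Fin d → ℝ) =>
      P r * K r.1) ((ν.prod volume).prod volume) := by
    have hKf : Continuous (fun r : (OGn n × (Fin (n - d) → ℝ)) × (Fin d → ℝ) => K r.1) :=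
      hKcont.comp continuous_fst
    have h := IntP.bdd_mul hKf.aestronglyMeasurable (c := M') (Filter.Eventually.of_forall fun r => hM' _)
    exact h.congr (Filter.Eventually.of_forall fun r => mul_comm _ _)
  -- conclusion 2
  have hQfun : (fun q : OGn n × (Fin (n - d) → ℝ) => ∫ t : Fin d → ℝ, P (q, t) * K q) =
      fun q => dplaneTransform n d hdn f q.1 q.2 * K q := by
    funext q
    rw [integral_mul_const]
    rfl
  have IntQ : Integrable (fun q : OGn n × (Fin (n - d) → ℝ) =>
      dplaneTransform n d hdn f q.1 q.2 * K q) (ν.prod volume) := by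
    have h := IntH.integral_prod_left
    rw [← hQfun]
    exact h
  -- conclusion 1
  have Int1 : Integrable (fun x => f x * dualDplane n d hdn ν Φ x) volume := by
    rw [hLHSfun]
    have h := IntF.swap.integral_prod_left
    exact h
  refine ⟨Int1, IntQ, ?_⟩
  -- the equality
  have hswap : ∫ x, ∫ g, F (g, x) ∂ν ∂(volume : Measure (EuclideanSpace ℝ (Fin n)))
      = ∫ g, ∫ x, F (g, x) ∂volume ∂ν := by
    exact integral_integral_swap (f := fun x g => F (g, x)) IntF.swap
  have key : ∀ g : OGn n, ∫ x, F (g, x) ∂volume =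
      ∫ w : Fin (n - d) → ℝ, dplaneTransform n d hdn f g w * K (g, w) := by
    intro g
    have h1 : ∫ p : (Fin (n - d) → ℝ) × (Fin d → ℝ), F (g, Aux.planeME n d hdn g p) ∂volume
        = ∫ x, F (g, x) ∂volume :=
      (Aux.planeME_mp n d hdn g).integral_comp (MeasurableEquiv.measurableEmbedding _)
        (fun x => F (g, x))
    rw [← h1]
    have h2 : (fun p : (Fin (n - d) → ℝ) × (Fin d → ℝ) => F (g, Aux.planeME n d hdn g p))
        = fun p => f (planePt n d hdn g p.1 p.2) * K (g, p.1) := by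
      funext p
      rw [hFdef]
      show f (Aux.planeME n d hdn g p) *
        K (g, Aux.projW n d hdn g (Aux.planeME n d hdn g p)) = _
      rw [Aux.planeME_apply, Aux.projW_planePt]
    rw [h2, Measure.volume_eq_prod, integral_prod _ (Ig g)]
    apply integral_congr_ae
    filter_upwards with w
    rw [integral_mul_const]
    rfl
  calc ∫ x, f x * dualDplane n d hdn ν Φ x = ∫ x, ∫ g, F (g, x) ∂ν := by rw [hLHSfun]
    _ = ∫ g, ∫ x, F (g, x) ∂volume ∂ν := hswap
    _ = ∫ g, ∫ w : Fin (n - d) → ℝ, dplaneTransform n d hdn f g w * K (g, w) ∂volume ∂ν :=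
        integral_congr_ae (Filter.Eventually.of_forall fun g => key g)
    _ = ∫ q : OGn n × (Fin (n - d) → ℝ),
          dplaneTransform n d hdn f q.1 q.2 * K q ∂(ν.prod volume) :=
        (integral_prod _ IntQ).symm
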